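/- Let A be self-adjoint with simple discrete spectrum {E_n} (orthonormal eigenbasis φ_n), and suppose every a_n = φ_n(x₀) ≠ 0 and all E_n are distinct. Define for α ∈ ℝ the rank-one perturbed resolvent R_α(z) = (A−z)⁻¹ + (α − F(z))⁻¹ ⟨G_{\bar z}, ·⟩ G_z for z with F(z) ≠ α. Then R_α(z) satisfies the first resolvent identity R_α(z) − R_α(w) = (z − w) R_α(z) R_α(w) for real z, w ∉ {E_n} with F(z) ≠ α ≠ F(w). -/

import Mathlib

open Filter Topology
open scoped RealInnerProductSpace

/-- Extract a coefficient from a `HasSum` expansion in a Hilbert basis. -/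
lemma hilbert_coeff {H : Type*} [NormedAddCommGroup H] [InnerProductSpace ℝ H]
    (φ : HilbertBasis ℕ ℝ H) (c : ℕ → ℝ) (v : H)
    (h : HasSum (fun n => c n • (φ n : H)) v) (m : ℕ) : ⟪(φ m : H), v⟫ = c m := by
  have h2 := h.mapL (innerSL ℝ (φ m : H))
  have he : (fun n => (innerSL ℝ (φ m : H)) (c n • (φ n : H)))
      = fun n => if n = m then c m else 0 := by
    funext n
    simp only [innerSL_apply_apply, inner_smul_right]
    rcases eq_or_ne n m with rfl | hnm
    · simp [orthonormal_iff_ite.mp φ.orthonormal, φ.orthonormal.1 n]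
    · simp [orthonormal_iff_ite.mp φ.orthonormal, hnm, Ne.symm hnm]
  rw [he] at h2
  exact h2.unique (hasSum_ite_eq m (c m))

/-- The rank-one perturbed resolvent
`R_α(z) = (A−z)⁻¹ + (α − F(z))⁻¹ ⟨G_z, ·⟩ G_z` satisfies the first resolvent
identity `R_α(z) − R_α(w) = (z − w) R_α(z) R_α(w)`. -/
theorem perturbed_resolvent_identity
    (H : Type*) [NormedAddCommGroup H] [InnerProductSpace ℝ H] [CompleteSpace H]
    (φ : HilbertBasis ℕ ℝ H)
    (E a : ℕ → ℝ) (hEpos : ∀ n, 0 < E n) (hEinj : Function.Injective E)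
    (hEtop : Tendsto E atTop atTop)
    (ha : ∀ n, a n ≠ 0)
    (hsum : Summable (fun n => a n ^ 2 * E n / (E n ^ 2 + 1)))
    (F : ℝ → ℝ)
    (hF : ∀ x, x ∉ Set.range E →
      F x = ∑' n, a n ^ 2 * (1 / (E n - x) - E n / (E n ^ 2 + 1)))
    (G : ℝ → H)
    (hG : ∀ x, x ∉ Set.range E →
      HasSum (fun n => (a n / (E n - x)) • (φ n : H)) (G x))
    (Res : ℝ → H →L[ℝ] H)
    (hRes : ∀ x, x ∉ Set.range E → ∀ n, Res x (φ n) = (E n - x)⁻¹ • (φ n : H))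
    (α : ℝ) (R : ℝ → H →L[ℝ] H)
    (hR : ∀ x, x ∉ Set.range E → F x ≠ α →
      ∀ f : H, R x f = Res x f + ((α - F x)⁻¹ * ⟪G x, f⟫) • G x)
    (z w : ℝ) (hz : z ∉ Set.range E) (hw : w ∉ Set.range E)
    (hFz : F z ≠ α) (hFw : F w ≠ α) :
    R z - R w = (z - w) • (R z ∘L R w) := by
  rcases eq_or_ne z w with rfl | hzw
  · simp
  have hzw' : z - w ≠ 0 := sub_ne_zero.mpr hzw
  have hne : ∀ x, x ∉ Set.range E → ∀ n, E n - x ≠ 0 := by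
    intro x hx n h
    exact hx ⟨n, by linarith [sub_eq_zero.mp h]⟩
  have hnz := hne z hz
  have hnw := hne w hw
  have huz : α - F z ≠ 0 := sub_ne_zero.mpr (Ne.symm hFz)
  have huw : α - F w ≠ 0 := sub_ne_zero.mpr (Ne.symm hFw)
  -- inner products against G x
  have hAsum : ∀ x, x ∉ Set.range E → ∀ f : H,
      HasSum (fun n => (a n / (E n - x)) * ⟪(φ n : H), f⟫) ⟪G x, f⟫ := by
    intro x hx f
    have h2 := (hG x hx).mapL (innerSL ℝ f)
    simp only [innerSL_apply_apply, inner_smul_right] at h2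
    have he : (fun n => (a n / (E n - x)) * ⟪(φ n : H), f⟫)
        = fun n => (a n / (E n - x)) * ⟪f, (φ n : H)⟫ := by
      funext n; rw [real_inner_comm f ((φ n : H))]
    rw [he, real_inner_comm f (G x)]
    exact h2
  -- expansion of Res x f
  have hResExp : ∀ x, x ∉ Set.range E → ∀ f : H,
      HasSum (fun n => ((E n - x)⁻¹ * ⟪(φ n : H), f⟫) • (φ n : H)) (Res x f) := by
    intro x hx f
    have h2 := (φ.hasSum_repr f).mapL (Res x)
    have he : (fun n => (Res x) (φ.repr f n • (φ n : H)))
        = fun n => ((E n - x)⁻¹ * ⟪(φ n : H), f⟫) • (φ n : H) := by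
      funext n
      rw [map_smul, hRes x hx, φ.repr_apply_apply, smul_smul, mul_comm]
    rwa [he] at h2
  have hReseff : ∀ x, x ∉ Set.range E → ∀ f : H, ∀ m,
      ⟪(φ m : H), Res x f⟫ = (E m - x)⁻¹ * ⟪(φ m : H), f⟫ :=
    fun x hx f m => hilbert_coeff φ _ _ (hResExp x hx f) m
  have hGcoeff : ∀ x, x ∉ Set.range E → ∀ m,
      ⟪(φ m : H), G x⟫ = a m / (E m - x) :=
    fun x hx m => hilbert_coeff φ _ _ (hG x hx) m
  -- (ii) inner product ⟪G z, G w⟫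
  have hGGsum : HasSum (fun n => (a n / (E n - z)) * (a n / (E n - w))) ⟪G z, G w⟫ := by
    have h2 := hAsum z hz (G w)
    have he : (fun n => (a n / (E n - z)) * ⟪(φ n : H), G w⟫)
        = fun n => (a n / (E n - z)) * (a n / (E n - w)) := by
      funext n; rw [hGcoeff w hw n]
    rwa [he] at h2
  -- summability of a²/(E−x)
  have hsumx : ∀ x : ℝ, Summable (fun n => a n ^ 2 / (E n - x)) := by
    intro x
    apply Summable.of_norm_bounded_eventually_nat
      (g := fun n => 4 * (a n ^ 2 * E n / (E n ^ 2 + 1))) (hsum.mul_left 4)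
    filter_upwards [hEtop.eventually_ge_atTop (max 1 (2 * |x|))] with n hn
    have h1 : (1 : ℝ) ≤ E n := le_trans (le_max_left _ _) hn
    have h2 : 2 * |x| ≤ E n := le_trans (le_max_right _ _) hn
    have hxa : x ≤ |x| := le_abs_self x
    have hEx : E n / 2 ≤ E n - x := by linarith
    have hExpos : 0 < E n - x := by linarith
    have hden : (0 : ℝ) < E n ^ 2 + 1 := by positivity
    rw [Real.norm_eq_abs, abs_div, abs_of_pos hExpos, abs_pow, sq_abs]
    have he4 : 4 * (a n ^ 2 * E n / (E n ^ 2 + 1)) = 4 * (a n ^ 2 * E n) / (E n ^ 2 + 1) := by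
      ring
    rw [he4, div_le_div_iff₀ hExpos hden]
    nlinarith [sq_nonneg (a n), mul_nonneg (sq_nonneg (a n)) (by nlinarith : (0:ℝ) ≤ E n ^ 2 - 1),
      mul_le_mul_of_nonneg_left hEx (by positivity : (0:ℝ) ≤ 4 * (a n ^ 2 * E n))]
  -- F as difference of tsums
  have hFsplit : ∀ x, x ∉ Set.range E →
      F x = (∑' n, a n ^ 2 / (E n - x)) - ∑' n, a n ^ 2 * E n / (E n ^ 2 + 1) := by
    intro x hx
    rw [hF x hx, ← Summable.tsum_sub (hsumx x) hsum]
    congr 1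
    funext n
    ring
  -- (i) F z − F w = (z − w) * ⟪G z, G w⟫
  have hFsub : F z - F w = (z - w) * ⟪G z, G w⟫ := by
    rw [hFsplit z hz, hFsplit w hw, sub_sub_sub_cancel_right,
      ← Summable.tsum_sub (hsumx z) (hsumx w), ← hGGsum.tsum_eq, ← tsum_mul_left]
    congr 1
    funext n
    field_simp [hnz n, hnw n]
    ring
  set bz : ℕ → ℝ := fun n => a n / (E n - z) with hbz
  set bw : ℕ → ℝ := fun n => a n / (E n - w) with hbw
  -- (iii) ⟪G z, Res w f⟫
  have hGRes : ∀ f : H, (z - w) * ⟪G z, Res w f⟫ = ⟪G z, f⟫ - ⟪G w, f⟫ := by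
    intro f
    have h1 := (hAsum z hz (Res w f)).mul_left (z - w)
    have h2 := (hAsum z hz f).sub (hAsum w hw f)
    have he : (fun n => (z - w) * (bz n * ⟪(φ n : H), Res w f⟫))
        = fun n => bz n * ⟪(φ n : H), f⟫ - bw n * ⟪(φ n : H), f⟫ := by
      funext n
      simp only [hReseff w hw f n, hbz, hbw]
      field_simp [hnz n, hnw n]
      ring
    rw [he] at h1
    exact h1.unique h2
  -- (iv) Res z (G w)
  have hResG : (z - w) • Res z (G w) = G z - G w := by
    have h1 := ((hG w hw).mapL (Res z)).const_smul (z - w)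
    have h2 := (hG z hz).sub (hG w hw)
    have he : (fun n => (z - w) • (Res z (bw n • (φ n : H))))
        = fun n => bz n • (φ n : H) - bw n • (φ n : H) := by
      funext n
      simp only [map_smul, hRes z hz, ← sub_smul, smul_smul, hbz, hbw]
      congr 1
      field_simp [hnz n, hnw n]
      ring
    rw [he] at h1
    exact h1.unique h2
  -- (v) first resolvent identity for Res
  have hResRes : ∀ f : H, (z - w) • Res z (Res w f) = Res z f - Res w f := by
    intro f
    have h1 := ((hResExp w hw f).mapL (Res z)).const_smul (z - w)
    have h2 := (hResExp z hz f).sub (hResExp w hw f)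
    have he : (fun n => (z - w) • (Res z (((E n - w)⁻¹ * ⟪(φ n : H), f⟫) • (φ n : H))))
        = fun n => ((E n - z)⁻¹ * ⟪(φ n : H), f⟫) • (φ n : H)
            - ((E n - w)⁻¹ * ⟪(φ n : H), f⟫) • (φ n : H) := by
      funext n
      simp only [map_smul, hRes z hz, ← sub_smul, smul_smul]
      congr 1
      field_simp [hnz n, hnw n]
      ring
    rw [he] at h1
    exact h1.unique h2
  -- final assembly
  ext f
  simp only [ContinuousLinearMap.sub_apply, ContinuousLinearMap.smul_apply,
    ContinuousLinearMap.coe_comp', Function.comp_apply]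
  rw [hR z hz hFz (R w f), hR w hw hFw f, hR z hz hFz f]
  rw [map_add, map_smul, inner_add_right, real_inner_smul_right]
  have e1 : Res z (Res w f) = (z - w)⁻¹ • (Res z f - Res w f) := by
    rw [← hResRes f, smul_smul, inv_mul_cancel₀ hzw', one_smul]
  have e2 : Res z (G w) = (z - w)⁻¹ • (G z - G w) := by
    rw [← hResG, smul_smul, inv_mul_cancel₀ hzw', one_smul]
  have e3 : ⟪G z, Res w f⟫ = (z - w)⁻¹ * (⟪G z, f⟫ - ⟪G w, f⟫) := by
    rw [← hGRes f, ← mul_assoc, inv_mul_cancel₀ hzw', one_mul]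
  have e4 : ⟪G z, G w⟫ = (z - w)⁻¹ * (F z - F w) := by
    rw [hFsub, ← mul_assoc, inv_mul_cancel₀ hzw', one_mul]
  rw [e1, e2, e3, e4]
  match_scalars <;> (field_simp; try ring)
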